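/- If a regular uncountable cardinal κ has the 2-stationarity property, then κ is a limit cardinal. -/

import Mathlib

open Cardinal Set

/-- `𝒫_κ(X)` : the subsets of `X` of cardinality `< κ`. -/
def Pk (κ : Cardinal.{1}) (X : Set Ordinal) : Set (Set Ordinal) :=
  {a | a ⊆ X ∧ Cardinal.mk ↥a < κ}

/-- `𝒫_κ(λ)` for an ordinal `λ` : subsets of `λ` of cardinality `< κ`. -/
def Pkl (κ : Cardinal.{0}) (l : Ordinal) : Set (Set Ordinal) :=
  Pk (Cardinal.lift.{1} κ) (Set.Iio l)

/-- `C` is club in `P` : `C ⊆ P`, `C` is cofinal (unbounded) in `P` with respect to `⊆`,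
and `C` is closed under unions of nonempty `⊆`-directed subfamilies (that land in `P`). -/
def IsClubIn (P C : Set (Set Ordinal)) : Prop :=
  C ⊆ P ∧ (∀ a ∈ P, ∃ b ∈ C, a ⊆ b) ∧
    ∀ D : Set (Set Ordinal), D ⊆ C → D.Nonempty → DirectedOn (· ⊆ ·) D →
      ⋃₀ D ∈ P → ⋃₀ D ∈ C

/-- `S` is stationary in `P` : `S` meets every club subset of `P`. -/
def IsStatIn (P S : Set (Set Ordinal)) : Prop :=
  ∀ C, IsClubIn P C → (S ∩ C).Nonempty

/-- the cardinality `|κ ∩ a|` of the intersection of `a` with (the set of ordinals below) `κ`. -/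
noncomputable def interCard (κ : Cardinal.{0}) (a : Set Ordinal) : Cardinal.{1} :=
  Cardinal.mk ↥(a ∩ Set.Iio κ.ord)

/-- `S ⊆ 𝒫_κ(λ)` is 2-stationary : for every stationary `T ⊆ 𝒫_κ(λ)` there is `a ∈ S` such
that `|κ ∩ a|` is a regular uncountable cardinal and `T ∩ 𝒫_{κ∩a}(a)` is stationary in
`𝒫_{κ∩a}(a)`. -/
def TwoStationary (κ : Cardinal.{0}) (l : Ordinal) (S : Set (Set Ordinal)) : Prop :=
  ∀ T ⊆ Pkl κ l, IsStatIn (Pkl κ l) T →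
    ∃ a ∈ S, (interCard κ a).IsRegular ∧ Cardinal.aleph0 < interCard κ a ∧
      IsStatIn (Pk (interCard κ a) a) (T ∩ Pk (interCard κ a) a)

/-- `κ` has the 2-stationarity property : `𝒫_κ(λ)` is 2-stationary in itself for all `λ ≥ κ`. -/
def TwoStatProperty (κ : Cardinal.{0}) : Prop :=
  ∀ l : Ordinal, κ.ord ≤ l → TwoStationary κ l (Pkl κ l)


/-- If a regular uncountable cardinal `κ` has the 2-stationarity property,
then `κ` is a limit cardinal. -/
theorem twoStatProperty_isLimit (κ : Cardinal.{0})
    (hreg : κ.IsRegular) (hunc : Cardinal.aleph0 < κ)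
    (h2 : TwoStatProperty κ) : κ ≠ 0 ∧ Order.IsSuccPrelimit κ := by
  constructor
  · exact fun h => by simp [h] at hunc
  · intro μ hcov
    -- κ = succ μ
    have hsucc : Order.succ μ = κ := hcov.succ_eq
    have hμκ : μ < κ := hcov.1
    -- the stationary (in fact club-cofinal) set T
    set T : Set (Set Ordinal) := {a | Set.Iio μ.ord ⊆ a ∧ a ∈ Pkl κ κ.ord} with hT
    have hTsub : T ⊆ Pkl κ κ.ord := fun a ha => ha.2
    have hIioCard : Cardinal.mk ↥(Set.Iio μ.ord) = Cardinal.lift.{1} μ := by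
      rw [Ordinal.mk_Iio_ordinal, Cardinal.card_ord]
    have hIiomem : Set.Iio μ.ord ∈ Pkl κ κ.ord := by
      refine ⟨fun x hx => Set.mem_Iio.2 (lt_of_lt_of_le (Set.mem_Iio.1 hx) ?_), ?_⟩
      · exact Cardinal.ord_le_ord.2 hμκ.le
      · rw [hIioCard]
        exact Cardinal.lift_lt.2 hμκ
    have hTstat : IsStatIn (Pkl κ κ.ord) T := by
      intro C hC
      obtain ⟨b, hbC, hsub⟩ := hC.2.1 (Set.Iio μ.ord) hIiomem
      exact ⟨b, ⟨hsub, hC.1 hbC⟩, hbC⟩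
    obtain ⟨a, haP, -, -, hstat⟩ := h2 κ.ord le_rfl T hTsub hTstat
    -- Pk ν a is a club in itself
    have hclub : IsClubIn (Pk (interCard κ a) a) (Pk (interCard κ a) a) :=
      ⟨le_refl _, fun b hb => ⟨b, hb, le_refl _⟩, fun _ _ _ _ h => h⟩
    obtain ⟨b, ⟨hbT, hbPk⟩, -⟩ := hstat _ hclub
    -- b contains Iio μ.ord, so mk b ≥ lift μ
    have h1 : Cardinal.lift.{1} μ ≤ Cardinal.mk ↥b := by
      rw [← hIioCard]; exact Cardinal.mk_le_mk_of_subset hbT.1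
    -- ν ≤ mk (a ∩ Iio κ.ord) ≤ mk a < lift κ = succ (lift μ), so ν ≤ lift μ
    have h2' : interCard κ a ≤ Cardinal.lift.{1} μ := by
      have hν : interCard κ a ≤ Cardinal.mk ↥a :=
        Cardinal.mk_le_mk_of_subset Set.inter_subset_left
      have hlt : interCard κ a < Cardinal.lift.{1} κ := lt_of_le_of_lt hν haP.2
      have heq : Cardinal.lift.{1} κ = Order.succ (Cardinal.lift.{1} μ) := by
        rw [← hsucc, Cardinal.lift_succ]
      rw [heq, Order.lt_succ_iff] at hlt
      exact hlt
    exact absurd (lt_of_le_of_lt h1 hbPk.2) (not_lt.2 h2')
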